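/- (S_finish, S_2^≠, [0,1], [1/2, ∞))↓ holds: from every configuration in which robot r is in state S_finish with observed distance in [0,1] and robot s satisfies condition S_2^≠ with observed distance at least 1/2, every fair SSynch execution of Algorithm 1 solves rendezvous. -/

import Mathlib

/-- Points in the plane. -/
abbrev Pt := EuclideanSpace ℝ (Fin 2)

/-- Observed directions. -/
inductive Dir | left | right
deriving DecidableEq

/-- The six internal states of Algorithm 1. -/
inductive St | start | s1 | s2 (d : Dir) | s3 | finish
deriving DecidableEq

/-- A local coordinate frame: an orthogonal linear map of the plane. -/
abbrev Frame := Pt ≃ₗᵢ[ℝ] Pt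

/-- Observed direction of a local vector `v`: `right` if its first coordinate is
positive, or is zero with positive second coordinate; `left` otherwise. -/
noncomputable def obsDir (v : Pt) : Dir :=
  if 0 < v 0 ∨ (v 0 = 0 ∧ 0 < v 1) then Dir.right else Dir.left

/-- Local vector observed by a robot with unit distance `u` and frame `A`,
located at `p`, looking at the other robot at `q`. -/
noncomputable def obsVec (u : ℝ) (A : Frame) (p q : Pt) : Pt := u⁻¹ • (A (q - p))

/-- Observed distance. -/
noncomputable def obsDist (u : ℝ) (p q : Pt) : ℝ := ‖q - p‖ / u

/-- Algorithm 1: given the current state, the observed distance `d` and the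
observed direction `dir`, returns the new state and the coefficient `μ` such
that the (global) destination is `p + μ • (q - p)` (i.e. local destination `μ • v`). -/
noncomputable def algo1 (s : St) (d : ℝ) (dir : Dir) : St × ℝ :=
  if d = 0 then (s, 0)
  else match s with
  | .start => if d < 1 then (.s1, 1 - 1/d) else (.s2 dir, 1)
  | .s1 => if d ≤ 1 then (.finish, 0) else (.s2 dir, 1)
  | .s2 d' =>
      if dir = d' then (.finish, 1)
      else if d < 1/2 then (.finish, 0)
      else if d < 1 then (.s3, 1/2)
      else (.s2 d', 1/2)
  | .s3 => if d < 1/4 then (.finish, 0) else (.finish, 1)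
  | .finish => if d ≤ 1 then (.finish, 0) else (.finish, 1)

/-- A configuration: positions and internal states of the two robots
(robot `r` is `false`, robot `s` is `true`). -/
structure Config where
  pos : Bool → Pt
  st : Bool → St

/-- Result (new position, new state) of one activation of robot `i`. -/
noncomputable def stepRobot (u : Bool → ℝ) (A : Bool → Frame) (c : Config) (i : Bool) :
    Pt × St :=
  let p := c.pos i
  let q := c.pos (!i)
  let d := obsDist (u i) p q
  let dir := obsDir (obsVec (u i) (A i) p q)
  let r := algo1 (c.st i) d dir
  (p + r.2 • (q - p), r.1)

/-- One synchronous round in which exactly the robots `i` with `act i = true`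
are activated; both activated robots observe the same (pre-round) configuration,
and rigidly reach their computed destinations. -/
noncomputable def stepConfig (u : Bool → ℝ) (A : Bool → Frame) (act : Bool → Bool)
    (c : Config) : Config where
  pos i := if act i then (stepRobot u A c i).1 else c.pos i
  st i := if act i then (stepRobot u A c i).2 else c.st i

/-- The configuration after `n` rounds of the SSynch execution of Algorithm 1
under schedule `sched`, starting from `c0`. -/
noncomputable def run (u : Bool → ℝ) (A : Bool → Frame) (sched : ℕ → Bool → Bool)
    (c0 : Config) : ℕ → Config
  | 0 => c0
  | n + 1 => stepConfig u A (sched n) (run u A sched c0 n)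

/-- A legal fair SSynch schedule: at every round a nonempty set of robots is
activated, and each robot is activated infinitely often. -/
def FairSched (sched : ℕ → Bool → Bool) : Prop :=
  (∀ n, sched n false = true ∨ sched n true = true) ∧
  (∀ i n, ∃ m, n ≤ m ∧ sched m i = true)

/-- Rendezvous is solved: from some round on, the two robots occupy the same
point and never move again. -/
noncomputable def Solves (u : Bool → ℝ) (A : Bool → Frame) (sched : ℕ → Bool → Bool)
    (c0 : Config) : Prop :=
  ∃ N : ℕ, ∀ n, N ≤ n → ∀ i, (run u A sched c0 n).pos i = (run u A sched c0 N).pos false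

/-- Conditions on a robot: one of the six internal states, or `S₂⁼` / `S₂≠`. -/
inductive Cond | start | s1 | s2 (d : Dir) | s2eq | s2ne | s3 | finish

/-- A robot in state `s` whose currently observed direction is `dir`
satisfies the condition. -/
def Cond.sat : Cond → St → Dir → Prop
  | .start, s, _ => s = .start
  | .s1, s, _ => s = .s1
  | .s2 d', s, _ => s = .s2 d'
  | .s2eq, s, dir => s = .s2 dir
  | .s2ne, s, dir => ∃ d', s = St.s2 d' ∧ d' ≠ dir
  | .s3, s, _ => s = .s3
  | .finish, s, _ => s = .finish

/-- `(S_a, S_b, I_a, I_b)↓` : for every choice of the units and frames, from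
every configuration in which robot `r` satisfies condition `Ca` with observed
distance in `Ia` and robot `s` satisfies condition `Cb` with observed distance
in `Ib`, every fair SSynch execution of Algorithm 1 solves Rendezvous. -/
noncomputable def Down (Ca Cb : Cond) (Ia Ib : Set ℝ) : Prop :=
  ∀ (u : Bool → ℝ) (A : Bool → Frame), (∀ i, 0 < u i) →
    ∀ c0 : Config,
      Ca.sat (c0.st false)
        (obsDir (obsVec (u false) (A false) (c0.pos false) (c0.pos true))) →
      obsDist (u false) (c0.pos false) (c0.pos true) ∈ Ia →
      Cb.sat (c0.st true)
        (obsDir (obsVec (u true) (A true) (c0.pos true) (c0.pos false))) →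
      obsDist (u true) (c0.pos true) (c0.pos false) ∈ Ib →
      ∀ sched : ℕ → Bool → Bool, FairSched sched → Solves u A sched c0


lemma obsDir_smul {v : Pt} {c : ℝ} (hc : 0 < c) : obsDir (c • v) = obsDir v := by
  have h0 : (c • v) 0 = c * v 0 := rfl
  have h1 : (c • v) 1 = c * v 1 := rfl
  unfold obsDir
  rw [h0, h1]
  have : (0 < c * v 0 ∨ (c * v 0 = 0 ∧ 0 < c * v 1)) ↔ (0 < v 0 ∨ (v 0 = 0 ∧ 0 < v 1)) := by
    rw [mul_pos_iff_of_pos_left hc, mul_pos_iff_of_pos_left hc, mul_eq_zero]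
    simp [hc.ne']
  simp only [this]

lemma algo1_finish {d : ℝ} (hd : d ≤ 1) (dir : Dir) :
    algo1 .finish d dir = (.finish, 0) := by
  rcases eq_or_ne d 0 with h | h <;> simp [algo1, h, hd]

lemma algo1_s3 {d : ℝ} (hd : 1/4 ≤ d) (dir : Dir) :
    algo1 .s3 d dir = (.finish, 1) := by
  have h0 : d ≠ 0 := by positivity
  simp [algo1, h0, not_lt.2 hd, (by linarith : ¬ d < 4⁻¹)]

lemma algo1_s2_mid {d : ℝ} {d' dir : Dir} (h1 : 1/2 ≤ d) (h2 : d < 1) (hne : dir ≠ d') :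
    algo1 (.s2 d') d dir = (.s3, 1/2) := by
  have h0 : d ≠ 0 := by positivity
  simp [algo1, h0, hne, h2, (by linarith : ¬ d < 2⁻¹)]

lemma algo1_s2_big {d : ℝ} {d' dir : Dir} (h1 : 1 ≤ d) (hne : dir ≠ d') :
    algo1 (.s2 d') d dir = (.s2 d', 1/2) := by
  have h0 : d ≠ 0 := by positivity
  have h2 : ¬ d < 1/2 := by linarith
  simp [algo1, h0, hne, not_lt.2 h1, (by linarith : ¬ d < 2⁻¹)]

lemma stepRobot_eq (u : Bool → ℝ) (A : Bool → Frame) (c : Config) (i : Bool) :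
    stepRobot u A c i =
      ((c.pos i) + (algo1 (c.st i) (obsDist (u i) (c.pos i) (c.pos (!i)))
          (obsDir (obsVec (u i) (A i) (c.pos i) (c.pos (!i))))).2 • (c.pos (!i) - c.pos i),
        (algo1 (c.st i) (obsDist (u i) (c.pos i) (c.pos (!i)))
          (obsDir (obsVec (u i) (A i) (c.pos i) (c.pos (!i))))).1) := rfl

example (p q : Pt) : q - (p + (1/2:ℝ) • (q - p)) = (1/2:ℝ) • (q - p) := by module
example (p q : Pt) : p + (1:ℝ) • (q - p) = q := by module
lemma config_eq {c c' : Config} (hp : ∀ i, c.pos i = c'.pos i)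
    (hs : ∀ i, c.st i = c'.st i) : c = c' := by
  cases c; cases c'; simp only [Config.mk.injEq]
  exact ⟨funext hp, funext hs⟩

/-- The InvL5 invariant. -/
def InvL5 (u : Bool → ℝ) (A : Bool → Frame) (P : Pt) (c : Config) (k : ℕ) : Prop :=
  c.pos false = P ∧ c.st false = St.finish ∧ ‖P - c.pos true‖ ≤ u false ∧
  ( (k = 0 ∧ c.st true = St.finish ∧ c.pos true = P)
  ∨ (k = 1 ∧ c.st true = St.s3 ∧ 1/4 ≤ obsDist (u true) (c.pos true) P)
  ∨ (∃ j d', k = j + 2 ∧ c.st true = St.s2 d' ∧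
      d' ≠ obsDir (obsVec (u true) (A true) (c.pos true) P) ∧
      1/2 ≤ obsDist (u true) (c.pos true) P ∧ obsDist (u true) (c.pos true) P < 2^j) )

lemma stepRobot_false {u : Bool → ℝ} {A : Bool → Frame} {P : Pt} {c : Config} {k : ℕ}
    (hu : 0 < u false) (h : InvL5 u A P c k) : stepRobot u A c false = (P, St.finish) := by
  obtain ⟨h1, h2, h3, -⟩ := h
  have hd : obsDist (u false) (c.pos false) (c.pos (!false)) ≤ 1 := by
    show ‖c.pos true - c.pos false‖ / u false ≤ 1
    rw [div_le_one hu, h1, norm_sub_rev]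
    exact h3
  rw [stepRobot_eq, h2, algo1_finish hd]
  simp [h1]

lemma stepRobot_true {u : Bool → ℝ} {A : Bool → Frame} {P : Pt} {c : Config}
    (h1 : c.pos false = P) :
    stepRobot u A c true =
      ((c.pos true) + (algo1 (c.st true) (obsDist (u true) (c.pos true) P)
          (obsDir (obsVec (u true) (A true) (c.pos true) P))).2 • (P - c.pos true),
        (algo1 (c.st true) (obsDist (u true) (c.pos true) P)
          (obsDir (obsVec (u true) (A true) (c.pos true) P))).1) := by
  rw [stepRobot_eq]
  simp only [Bool.not_true, h1]

lemma stepRobot_self {u : Bool → ℝ} {A : Bool → Frame} {c : Config} {i : Bool}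
    (h : c.pos i = c.pos (!i)) : stepRobot u A c i = (c.pos i, c.st i) := by
  have hd : obsDist (u i) (c.pos i) (c.pos (!i)) = 0 := by
    simp [obsDist, ← h]
  rw [stepRobot_eq, hd]
  simp [algo1]

lemma invL5_zero {u : Bool → ℝ} {A : Bool → Frame} {P : Pt} {c : Config}
    (h : InvL5 u A P c 0) (act : Bool → Bool) : stepConfig u A act c = c := by
  obtain ⟨h1, h2, h3, hcase⟩ := h
  have hP : c.pos true = P := by
    rcases hcase with ⟨-, -, hP⟩ | ⟨hk, -⟩ | ⟨j, d', hk, -⟩ <;> first | exact hP | omega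
  have heq : ∀ i, c.pos i = c.pos (!i) := by
    intro i; cases i <;> simp [h1, hP]
  apply config_eq <;> intro i <;> simp [stepConfig, stepRobot_self (heq i)]

lemma invL5_notact {u : Bool → ℝ} {A : Bool → Frame} {P : Pt} {c : Config} {k : ℕ}
    {act : Bool → Bool} (hu : 0 < u false) (h : InvL5 u A P c k)
    (hact : act true = false) : stepConfig u A act c = c := by
  apply config_eq <;> intro i <;> cases i <;>
    simp [stepConfig, hact, stepRobot_false hu h, h.1, h.2.1]
lemma invL5_step {u : Bool → ℝ} {A : Bool → Frame} {P : Pt} {c : Config} {k : ℕ}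
    {act : Bool → Bool} (hu : ∀ i, 0 < u i) (h : InvL5 u A P c (k+1))
    (hact : act true = true) :
    ∃ k' ≤ k, InvL5 u A P (stepConfig u A act c) k' := by
  obtain ⟨h1, h2, h3, hcase⟩ := h
  have hinv : InvL5 u A P c (k+1) := ⟨h1, h2, h3, hcase⟩
  have hrpos : (stepConfig u A act c).pos false = P := by
    cases hf : act false <;>
      simp [stepConfig, hf, h1, stepRobot_false (hu false) hinv]
  have hrst : (stepConfig u A act c).st false = St.finish := by
    cases hf : act false <;>
      simp [stepConfig, hf, h2, stepRobot_false (hu false) hinv]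
  have hspos : (stepConfig u A act c).pos true = (stepRobot u A c true).1 := by
    simp [stepConfig, hact]
  have hsst : (stepConfig u A act c).st true = (stepRobot u A c true).2 := by
    simp [stepConfig, hact]
  set p := c.pos true with hp_def
  set d := obsDist (u true) p P with hd_def
  have hdval : d = ‖P - p‖ / u true := rfl
  have hstep := stepRobot_true (u := u) (A := A) h1
  set m := p + (1/2 : ℝ) • (P - p) with hm_def
  have hvec : P - m = (1/2 : ℝ) • (P - p) := by rw [hm_def]; module
  have hnorm : ‖P - m‖ = (1/2) * ‖P - p‖ := by
    rw [hvec, norm_smul, Real.norm_eq_abs, abs_of_pos (by norm_num : (0:ℝ) < 1/2)]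
  have hdist : obsDist (u true) m P = d / 2 := by
    show ‖P - m‖ / u true = d / 2
    rw [hnorm, hdval]; ring
  have hobs : obsVec (u true) (A true) m P = (1/2 : ℝ) • obsVec (u true) (A true) p P := by
    unfold obsVec; rw [hvec, map_smul, smul_comm]
  have hdir2 : obsDir (obsVec (u true) (A true) m P) =
      obsDir (obsVec (u true) (A true) p P) := by
    rw [hobs]; exact obsDir_smul (by norm_num)
  rcases hcase with ⟨hk, -, -⟩ | ⟨hk, hst, hd⟩ | ⟨j, d', hk, hst, hdir, hd1, hd2⟩
  · exact absurd hk (Nat.succ_ne_zero k)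
  · -- state s3 : jump to r
    rw [hst, algo1_s3 hd] at hstep
    have hp' : (stepRobot u A c true).1 = P := by
      rw [hstep]; show p + (1:ℝ) • (P - p) = P; module
    have hs' : (stepRobot u A c true).2 = St.finish := by rw [hstep]
    refine ⟨0, Nat.zero_le _, hrpos, hrst, ?_, Or.inl ⟨rfl, ?_, ?_⟩⟩
    · rw [hspos, hp']; simpa using le_of_lt (hu false)
    · rw [hsst, hs']
    · rw [hspos, hp']
  · -- state s2 d'
    have hne : obsDir (obsVec (u true) (A true) p P) ≠ d' := Ne.symm hdir
    by_cases hbig : 1 ≤ d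
    · obtain ⟨j', rfl⟩ : ∃ j', j = j' + 1 := by
        cases j with
        | zero => exfalso; simp at hd2; linarith
        | succ j' => exact ⟨j', rfl⟩
      rw [hst, algo1_s2_big hbig hne] at hstep
      have hp' : (stepRobot u A c true).1 = m := by rw [hstep]
      have hs' : (stepRobot u A c true).2 = St.s2 d' := by rw [hstep]
      have hkk : k = j' + 2 := by omega
      have hpow : (2:ℝ) ^ (j' + 1) = 2 * 2 ^ j' := by ring
      refine ⟨k, le_rfl, hrpos, hrst, ?_,
        Or.inr (Or.inr ⟨j', d', hkk, ?_, ?_, ?_, ?_⟩)⟩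
      · rw [hspos, hp', hnorm]
        have := norm_nonneg (P - p)
        linarith
      · rw [hsst, hs']
      · rw [hspos, hp', hdir2]; exact hdir
      · rw [hspos, hp', hdist]; linarith
      · rw [hspos, hp', hdist]; rw [hpow] at hd2; linarith
    · rw [hst, algo1_s2_mid hd1 (not_le.1 hbig) hne] at hstep
      have hp' : (stepRobot u A c true).1 = m := by rw [hstep]
      have hs' : (stepRobot u A c true).2 = St.s3 := by rw [hstep]
      refine ⟨1, by omega, hrpos, hrst, ?_, Or.inr (Or.inl ⟨rfl, ?_, ?_⟩)⟩
      · rw [hspos, hp', hnorm]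
        have := norm_nonneg (P - p)
        linarith
      · rw [hsst, hs']
      · rw [hspos, hp', hdist]; linarith
/-- Lemma 4: `(S_finish, S_2^≠, [0,1], [1/2, ∞))↓`. -/
theorem lemma_l5 :
    Down Cond.finish Cond.s2ne (Set.Icc (0 : ℝ) 1) (Set.Ici (1/2 : ℝ)) := by
  intro u A hu c0 hr hdr hs hds sched hfair
  classical
  set P := c0.pos false with hP
  obtain ⟨d', hst0, hdir0⟩ := hs
  have hr' : c0.st false = St.finish := hr
  have hds' : (1:ℝ)/2 ≤ obsDist (u true) (c0.pos true) P := hds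
  have hdr' : ‖P - c0.pos true‖ ≤ u false := by
    have h1 : ‖c0.pos true - P‖ / u false ≤ 1 := hdr.2
    have h2 := (div_le_one (hu false)).1 h1
    rwa [norm_sub_rev] at h2
  set ds0 := obsDist (u true) (c0.pos true) P with hds0
  have hk0 : ds0 < 2 ^ ⌈ds0⌉₊ := by
    calc ds0 ≤ (⌈ds0⌉₊ : ℝ) := Nat.le_ceil _
    _ < 2 ^ ⌈ds0⌉₊ := by exact_mod_cast (Nat.lt_two_pow_self (n := ⌈ds0⌉₊))
  have hinit : InvL5 u A P c0 (⌈ds0⌉₊ + 2) :=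
    ⟨rfl, hr', hdr', Or.inr (Or.inr ⟨⌈ds0⌉₊, d', rfl, hst0, hdir0, hds', hk0⟩)⟩
  have main : ∀ k n, InvL5 u A P (run u A sched c0 n) k → Solves u A sched c0 := by
    intro k
    induction k using Nat.strong_induction_on with
    | _ k ih =>
      intro n hn
      cases k with
      | zero =>
        have hconst : ∀ m, n ≤ m → run u A sched c0 m = run u A sched c0 n := by
          intro m hm
          induction m, hm using Nat.le_induction with
          | base => rfl
          | succ m hm ih2 =>
            show stepConfig u A (sched m) (run u A sched c0 m) = _
            rw [ih2]
            exact invL5_zero hn _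
        refine ⟨n, fun m hm i => ?_⟩
        rw [hconst m hm]
        cases i
        · rfl
        · have hPt : (run u A sched c0 n).pos true = P := by
            rcases hn.2.2.2 with ⟨-, -, hPt⟩ | ⟨hk, -⟩ | ⟨j, e, hk, -⟩ <;>
              first | exact hPt | omega
          rw [hPt, hn.1]
      | succ k =>
        have hex : ∃ m, n ≤ m ∧ sched m true = true := hfair.2 true n
        have hQm := Nat.find_spec hex
        set m := Nat.find hex with hm_def
        have hconst : ∀ j, n ≤ j → j ≤ m → run u A sched c0 j = run u A sched c0 n := by
          intro j hj
          induction j, hj using Nat.le_induction with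
          | base => intro _; rfl
          | succ j hj ih2 =>
            intro hjm
            have hlt : j < m := hjm
            have hns : ¬ (n ≤ j ∧ sched j true = true) := Nat.find_min hex hlt
            have hsj : sched j true = false := by
              cases hsj : sched j true
              · rfl
              · exact absurd ⟨hj, hsj⟩ hns
            show stepConfig u A (sched j) (run u A sched c0 j) = _
            rw [ih2 (le_of_lt hlt)]
            exact invL5_notact (hu false) hn hsj
        have hminv : InvL5 u A P (run u A sched c0 m) (k+1) := by
          rw [hconst m hQm.1 le_rfl]; exact hn
        obtain ⟨k', hk', hinv'⟩ := invL5_step hu hminv hQm.2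
        exact ih k' (Nat.lt_succ_of_le hk') (m+1) hinv'
  exact main _ 0 hinit
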